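/- Let (Θ, 𝓕) be a measurable space, Q a probability measure on Θ (the agent's prior), Θ₀ ⊆ Θ a measurable set (the null set) with complement Θ₁, and β : Θ → ℝ a measurable function with 0 ≤ β(θ) ≤ 1 for all θ (the power function, β(θ) being the probability of approval when the parameter is θ). Let C, R, τ be real numbers with R > 0 and τ > 0. Assume the p-value is valid under the null, i.e. β(θ) ≤ τ for every θ ∈ Θ₀, and assume the agent's participation constraint ∫_Θ β dQ ≥ C/R holds. Then τ · ∫_{Θ₁} β dQ ≥ (C/R − τ) · ∫_{Θ₀} β dQ; in particular, if ∫_{Θ₀} β dQ > 0, the posterior odds of nonnull given approval satisfy (∫_{Θ₁} β dQ) / (∫_{Θ₀} β dQ) ≥ (C/R − τ)/τ. -/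

import Mathlib

open MeasureTheory

/-- Theorem 1 (incentive-theoretic bound on the posterior odds of nonnull). -/
theorem posterior_odds_bound
    {Θ : Type*} [MeasurableSpace Θ]
    (Q : Measure Θ) [IsProbabilityMeasure Q]
    (Θ₀ : Set Θ) (hΘ₀ : MeasurableSet Θ₀)
    (β : Θ → ℝ) (hβmeas : Measurable β)
    (hβ0 : ∀ θ, 0 ≤ β θ) (hβ1 : ∀ θ, β θ ≤ 1)
    (C R τ : ℝ) (hR : 0 < R) (hτ : 0 < τ)
    (hvalid : ∀ θ ∈ Θ₀, β θ ≤ τ)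
    (hparticipate : ∫ θ, β θ ∂Q ≥ C / R) :
    τ * ∫ θ in Θ₀ᶜ, β θ ∂Q ≥ (C / R - τ) * ∫ θ in Θ₀, β θ ∂Q ∧
      ((0 < ∫ θ in Θ₀, β θ ∂Q) →
        (∫ θ in Θ₀ᶜ, β θ ∂Q) / (∫ θ in Θ₀, β θ ∂Q) ≥ (C / R - τ) / τ) := by
  have hint : Integrable β Q := by
    have : ∀ θ, ‖β θ‖ ≤ 1 := fun θ => by
      rw [Real.norm_eq_abs, abs_le]; exact ⟨by linarith [hβ0 θ], hβ1 θ⟩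
    exact ⟨hβmeas.aestronglyMeasurable,
      (HasFiniteIntegral.of_bounded (C := 1) (Filter.Eventually.of_forall this))⟩
  have hsplit : ∫ θ, β θ ∂Q = (∫ θ in Θ₀, β θ ∂Q) + ∫ θ in Θ₀ᶜ, β θ ∂Q :=
    (integral_add_compl hΘ₀ hint).symm
  set I₀ := ∫ θ in Θ₀, β θ ∂Q with hI₀
  set I₁ := ∫ θ in Θ₀ᶜ, β θ ∂Q with hI₁
  have hI₀nn : 0 ≤ I₀ := setIntegral_nonneg hΘ₀ (fun θ _ => hβ0 θ)
  have hI₁nn : 0 ≤ I₁ := setIntegral_nonneg hΘ₀.compl (fun θ _ => hβ0 θ)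
  have hI₀le : I₀ ≤ τ := by
    calc I₀ ≤ ∫ _ in Θ₀, τ ∂Q :=
          setIntegral_mono_on hint.integrableOn (integrableOn_const (measure_ne_top _ _))
            hΘ₀ (fun θ hθ => hvalid θ hθ)
      _ = (Q Θ₀).toReal * τ := by simp; left; rfl
      _ ≤ 1 * τ := by
          apply mul_le_mul_of_nonneg_right _ hτ.le
          exact ENNReal.toReal_le_of_le_ofReal one_pos.le (by simpa using prob_le_one)
      _ = τ := one_mul τ
  have hkey : C / R - τ ≤ I₁ := by
    have := hparticipate
    rw [hsplit] at this; linarith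
  constructor
  · rcases le_or_gt (C / R - τ) 0 with h | h
    · have : (C / R - τ) * I₀ ≤ 0 := mul_nonpos_of_nonpos_of_nonneg h hI₀nn
      nlinarith
    · calc (C / R - τ) * I₀ ≤ I₁ * τ := mul_le_mul hkey hI₀le hI₀nn (le_trans h.le hkey)
        _ = τ * I₁ := mul_comm _ _
  · intro hI₀pos
    rw [ge_iff_le, div_le_div_iff₀ hτ hI₀pos]
    rcases le_or_gt (C / R - τ) 0 with h | h
    · nlinarith
    · exact mul_le_mul hkey hI₀le hI₀nn (le_trans h.le hkey)
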